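/- For every integer k ≥ 1, the identity x_k = (1/(k(k+1)(k+2)))·∑_{s=1}^k s(s+1)·c(1,s) + (2/(k(k+1)(k+2)))·∑_{l=2}^∞ l·(∑_{s=1}^k (s+1)·c(l,s)) − (1/k)·∑_{l=2}^∞ l·c(l,k) holds, where x_k = ∑_{l=2}^∞ c(l,k) and all series involved converge. -/

import Mathlib

open scoped Classical

/-- The constants `c(l,k)`: `c(l,0) = c(0,k) = 0`,
`c(1,k) = (2k²+14k)/((k+1)(k+2)(k+3)(k+4))` for `k ≥ 1`, and for `l > 1`, `k > 0`,
`c(l,k) = c(l,k-1)·(l+k-1)/(2l+k+2) + c(l-1,k)·(l-1)/(2l+k+2)`. -/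
noncomputable def c : ℕ → ℕ → ℝ
  | _, 0 => 0
  | 0, _ => 0
  | 1, k + 1 =>
      (2 * ((k : ℝ) + 1) ^ 2 + 14 * ((k : ℝ) + 1)) /
        (((k : ℝ) + 2) * ((k : ℝ) + 3) * ((k : ℝ) + 4) * ((k : ℝ) + 5))
  | l + 2, k + 1 =>
      c (l + 2) k * ((l : ℝ) + (k : ℝ) + 2) / (2 * (l : ℝ) + (k : ℝ) + 7) +
      c (l + 1) (k + 1) * ((l : ℝ) + 1) / (2 * (l : ℝ) + (k : ℝ) + 7)
termination_by l k => (l, k)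

lemma c_zero (l : ℕ) : c l 0 = 0 := by cases l <;> simp [c]

lemma c_one (k : ℕ) : c 1 (k + 1) =
    (2 * ((k : ℝ) + 1) ^ 2 + 14 * ((k : ℝ) + 1)) /
        (((k : ℝ) + 2) * ((k : ℝ) + 3) * ((k : ℝ) + 4) * ((k : ℝ) + 5)) := by
  simp [c]

lemma c_rec (l k : ℕ) : c (l + 2) (k + 1) =
      c (l + 2) k * ((l : ℝ) + (k : ℝ) + 2) / (2 * (l : ℝ) + (k : ℝ) + 7) +
      c (l + 1) (k + 1) * ((l : ℝ) + 1) / (2 * (l : ℝ) + (k : ℝ) + 7) := by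
  rw [c]

lemma c_nonneg (l k : ℕ) : 0 ≤ c l k := by
  induction l generalizing k with
  | zero => cases k <;> simp [c]
  | succ l ihl =>
    induction k with
    | zero => simp [c_zero]
    | succ k ihk =>
      match l, ihk with
      | 0, _ => rw [c_one]; positivity
      | l + 1, ihk =>
        rw [c_rec]
        have h1 := ihl (k + 1)
        have hD : (0:ℝ) < 2 * (l:ℝ) + (k:ℝ) + 7 := by positivity
        have ha : (0:ℝ) ≤ (l:ℝ) + (k:ℝ) + 2 := by positivity
        have hb : (0:ℝ) ≤ (l:ℝ) + 1 := by positivity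
        positivity

lemma c_one_le_one (k : ℕ) : c 1 (k + 1) ≤ 1 := by
  rw [c_one, div_le_one (by positivity)]
  nlinarith [sq_nonneg ((k:ℝ)), sq_nonneg ((k:ℝ)+1), sq_nonneg ((k:ℝ)^2)]

lemma c_bound (k l : ℕ) : c (l + 1) k ≤ 3 ^ k * (3/4) ^ l := by
  induction k generalizing l with
  | zero => rw [c_zero]; positivity
  | succ k ihk =>
    induction l with
    | zero =>
      calc c 1 (k+1) ≤ 1 := c_one_le_one k
      _ ≤ 3 ^ (k+1) * (3/4)^0 := by
          simp
          exact one_le_pow₀ (by norm_num)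
    | succ l ihl =>
      rw [c_rec]
      have h1 := ihk (l + 1)
      have hc1 := c_nonneg (l + 2) k
      have hc2 := c_nonneg (l + 1) (k + 1)
      have hD : (0:ℝ) < 2 * (l:ℝ) + (k:ℝ) + 7 := by positivity
      rw [← add_div, div_le_iff₀ hD]
      have hB1 : (0:ℝ) ≤ 3 ^ k * (3/4)^(l+1) := by positivity
      have hB2 : (0:ℝ) ≤ 3 ^ (k+1) * (3/4)^l := by positivity
      have e1 : c (l+2) k * ((l:ℝ) + (k:ℝ) + 2) ≤ (3 ^ k * (3/4)^(l+1)) * (2*(l:ℝ)+(k:ℝ)+7) :=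
        mul_le_mul h1 (by linarith) (by positivity) hB1
      have e2 : c (l+1) (k+1) * (2*((l:ℝ)+1)) ≤ (3 ^ (k+1) * (3/4)^l) * (2*(l:ℝ)+(k:ℝ)+7) :=
        mul_le_mul ihl (by linarith) (by positivity) hB2
      have keyD : (3:ℝ) ^ k * (3/4)^(l+1) * (2*(l:ℝ)+(k:ℝ)+7) +
          (3 ^ (k+1) * (3/4)^l) * (2*(l:ℝ)+(k:ℝ)+7) / 2 =
          3 ^ (k+1) * (3/4)^(l+1) * (2*(l:ℝ)+(k:ℝ)+7) := by ring
      linarith [e1, e2]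

lemma c_summable1 (k : ℕ) : Summable (fun l : ℕ => c (l + 1) k) := by
  apply Summable.of_nonneg_of_le (fun l => c_nonneg _ _) (fun l => c_bound k l)
  exact (summable_geometric_of_lt_one (by norm_num) (by norm_num)).mul_left _

lemma c_mul_summable1 (k : ℕ) : Summable (fun l : ℕ => ((l:ℝ) + 1) * c (l + 1) k) := by
  apply Summable.of_nonneg_of_le
    (fun l => mul_nonneg (by positivity) (c_nonneg _ _))
    (fun l => mul_le_mul_of_nonneg_left (c_bound k l) (by positivity))
  have h1 : Summable (fun l : ℕ => ((l:ℝ))^1 * (3/4) ^ l) :=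
    summable_pow_mul_geometric_of_norm_lt_one 1 (r := (3/4:ℝ)) (by norm_num)
  have h2 : Summable (fun l : ℕ => ((3:ℝ)/4) ^ l) :=
    summable_geometric_of_lt_one (by norm_num) (by norm_num)
  exact ((h1.add h2).mul_left ((3:ℝ)^k)).congr fun l => by ring

lemma c_summable2 (k : ℕ) : Summable (fun l : ℕ => c (l + 2) k) := by
  have := (summable_nat_add_iff 1).2 (c_summable1 k)
  exact this.congr fun n => by norm_num

lemma c_mul_summable2 (k : ℕ) : Summable (fun l : ℕ => ((l:ℝ) + 2) * c (l + 2) k) := by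
  have := (summable_nat_add_iff 1).2 (c_mul_summable1 k)
  exact this.congr fun n => by push_cast; ring_nf

noncomputable def X (k : ℕ) : ℝ := ∑' l : ℕ, c (l + 2) k
noncomputable def Y (k : ℕ) : ℝ := ∑' l : ℕ, ((l:ℝ) + 2) * c (l + 2) k

lemma X_zero : X 0 = 0 := by simp [X, c_zero]
lemma Y_zero : Y 0 = 0 := by simp [Y, c_zero]

lemma cstar (k : ℕ) :
    Y (k+1) + ((k:ℝ) + 3) * X (k+1) = (k:ℝ) * X k + Y k + c 1 (k+1) := by
  have hpt : ∀ l : ℕ,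
      2 * (((l:ℝ) + 2) * c (l+2) (k+1)) + ((k:ℝ) + 3) * c (l+2) (k+1) =
      (((l:ℝ) + 2) * c (l+2) k + (k:ℝ) * c (l+2) k) + ((l:ℝ) + 1) * c (l+1) (k+1) := by
    intro l
    rw [c_rec]
    have hD : (0:ℝ) < 2 * (l:ℝ) + (k:ℝ) + 7 := by positivity
    field_simp
    ring
  have hs1 := (c_mul_summable2 (k+1)).mul_left 2
  have hs2 := (c_summable2 (k+1)).mul_left ((k:ℝ) + 3)
  have hs3 := c_mul_summable2 k
  have hs4' : Summable (fun l : ℕ => (k:ℝ) * c (l+2) k) := (c_summable2 k).mul_left (k:ℝ)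
  have hs5' : Summable (fun l : ℕ => ((l:ℝ) + 1) * c (l+1) (k+1)) := c_mul_summable1 (k+1)
  have hL : ∑' l : ℕ, (2 * (((l:ℝ) + 2) * c (l+2) (k+1)) + ((k:ℝ) + 3) * c (l+2) (k+1)) =
      2 * Y (k+1) + ((k:ℝ) + 3) * X (k+1) := by
    rw [Summable.tsum_add hs1 hs2, tsum_mul_left, tsum_mul_left]; rfl
  have hR : ∑' l : ℕ, ((((l:ℝ) + 2) * c (l+2) k + (k:ℝ) * c (l+2) k) + ((l:ℝ) + 1) * c (l+1) (k+1)) =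
      (Y k + (k:ℝ) * X k) + (c 1 (k+1) + Y (k+1)) := by
    rw [Summable.tsum_add (hs3.add hs4') hs5', Summable.tsum_add hs3 hs4', tsum_mul_left]
    congr 1
    rw [Summable.tsum_eq_zero_add hs5']
    norm_num
    exact tsum_congr fun n => by push_cast; ring
  have := tsum_congr (L := SummationFilter.unconditional ℕ) hpt
  rw [hL, hR] at this
  linarith

lemma G (k : ℕ) :
    (k:ℝ) * ((k:ℝ)+1) * ((k:ℝ)+2) * X k + ((k:ℝ)+1) * ((k:ℝ)+2) * Y k =
      ∑ s ∈ Finset.Icc 1 k, ((s:ℝ) * ((s:ℝ)+1) * c 1 s + 2 * ((s:ℝ)+1) * Y s) := by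
  induction k with
  | zero => simp [X_zero, Y_zero]
  | succ k ih =>
    rw [Finset.sum_Icc_succ_top (by omega : 1 ≤ k + 1), ← ih]
    have h := cstar k
    push_cast
    linear_combination ((k:ℝ)+1) * ((k:ℝ)+2) * h

/-- For every `k ≥ 1`, with `x_k = ∑_{l=2}^∞ c(l,k)`, all series below converge and
`x_k = (1/(k(k+1)(k+2)))·∑_{s=1}^k s(s+1)c(1,s)
     + (2/(k(k+1)(k+2)))·∑_{l=2}^∞ l·(∑_{s=1}^k (s+1)c(l,s)) − (1/k)·∑_{l=2}^∞ l·c(l,k)`. -/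
theorem x_identity :
    ∀ k : ℕ, 1 ≤ k →
      Summable (fun l : ℕ => c (l + 2) k) ∧
      Summable (fun l : ℕ => ((l : ℝ) + 2) * ∑ s ∈ Finset.Icc 1 k, ((s : ℝ) + 1) * c (l + 2) s) ∧
      Summable (fun l : ℕ => ((l : ℝ) + 2) * c (l + 2) k) ∧
      (∑' l : ℕ, c (l + 2) k) =
        (1 / ((k : ℝ) * ((k : ℝ) + 1) * ((k : ℝ) + 2))) *
            (∑ s ∈ Finset.Icc 1 k, (s : ℝ) * ((s : ℝ) + 1) * c 1 s) +
          (2 / ((k : ℝ) * ((k : ℝ) + 1) * ((k : ℝ) + 2))) *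
            (∑' l : ℕ, ((l : ℝ) + 2) * ∑ s ∈ Finset.Icc 1 k, ((s : ℝ) + 1) * c (l + 2) s) -
          (1 / (k : ℝ)) * ∑' l : ℕ, ((l : ℝ) + 2) * c (l + 2) k := by
  intro k hk
  have hpt : ∀ l : ℕ, ((l : ℝ) + 2) * ∑ s ∈ Finset.Icc 1 k, ((s : ℝ) + 1) * c (l + 2) s =
      ∑ s ∈ Finset.Icc 1 k, ((s : ℝ) + 1) * (((l : ℝ) + 2) * c (l + 2) s) := by
    intro l
    rw [Finset.mul_sum]
    exact Finset.sum_congr rfl fun s _ => by ring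
  have hsum2 : Summable (fun l : ℕ =>
      ((l : ℝ) + 2) * ∑ s ∈ Finset.Icc 1 k, ((s : ℝ) + 1) * c (l + 2) s) := by
    apply Summable.congr _ fun l => (hpt l).symm
    exact summable_sum fun s _ => (c_mul_summable2 s).mul_left ((s:ℝ)+1)
  refine ⟨c_summable2 k, hsum2, c_mul_summable2 k, ?_⟩
  have hswap : (∑' l : ℕ, ((l : ℝ) + 2) * ∑ s ∈ Finset.Icc 1 k, ((s : ℝ) + 1) * c (l + 2) s) =
      ∑ s ∈ Finset.Icc 1 k, ((s:ℝ) + 1) * Y s := by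
    rw [tsum_congr hpt, Summable.tsum_finsetSum fun s _ => (c_mul_summable2 s).mul_left ((s:ℝ)+1)]
    exact Finset.sum_congr rfl fun s _ => by rw [tsum_mul_left]; rfl
  have hXk : (∑' l : ℕ, c (l + 2) k) = X k := rfl
  have hYk : (∑' l : ℕ, ((l : ℝ) + 2) * c (l + 2) k) = Y k := rfl
  rw [hswap, hXk, hYk]
  have hG := G k
  rw [Finset.sum_add_distrib] at hG
  have h2 : ∑ s ∈ Finset.Icc 1 k, 2 * ((s:ℝ)+1) * Y s =
      2 * ∑ s ∈ Finset.Icc 1 k, ((s:ℝ)+1) * Y s := by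
    rw [Finset.mul_sum]
    exact Finset.sum_congr rfl fun s _ => by ring
  rw [h2] at hG
  have hk0 : (k:ℝ) ≠ 0 := Nat.cast_ne_zero.2 (by omega)
  field_simp
  linear_combination hG
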